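/- Suppose additionally that σ_0² ≤ G ‖x_0 − x*‖² for some G ≥ 0, that A + BC/(2ρ) > 0, and take the step size γ = 1/(4(A + BC/(2ρ))). Then for every ε > 0 and every integer k ≥ 1: if k ≥ ( 4(A + BC/(2ρ)) + B G / (2(2ρA + BC)) ) · ‖x_0 − x*‖² / ε, then E[f(x̄_k) − f(x*)] ≤ ε, where x̄_k = (1/k) Σ_{j=0}^{k−1} x_j. -/

import Mathlib

open MeasureTheory Finset
open scoped RealInnerProductSpace

/-- Corollary, iteration complexity of variance reduced methods:
if `σ₀² ≤ G‖x₀−x*‖²`, `A + BC/(2ρ) > 0` and `γ = 1/(4(A+BC/(2ρ)))`, then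
`k ≥ (4(A+BC/(2ρ)) + BG/(2(2ρA+BC)))·‖x₀−x*‖²/ε` implies `E[f(x̄_k) − f(x*)] ≤ ε`. -/
lemma condexp_euclidean_coord {Ω : Type*} {m m0 : MeasurableSpace Ω} {μ : Measure Ω}
    [IsFiniteMeasure μ] (hm : m ≤ m0) {d : ℕ} {g : Ω → EuclideanSpace ℝ (Fin d)}
    (hg : Integrable g μ) (i : Fin d) :
    (fun ω => (μ[g|m]) ω i) =ᵐ[μ] μ[fun ω => g ω i|m] := by
  haveI : SigmaFinite (μ.trim hm) := by
    have : IsFiniteMeasure (μ.trim hm) := inferInstance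
    exact this.toSigmaFinite
  refine ae_eq_condExp_of_forall_setIntegral_eq hm
    ((EuclideanSpace.proj i : EuclideanSpace ℝ (Fin d) →L[ℝ] ℝ).integrable_comp hg)
    (fun s _ _ => ((EuclideanSpace.proj i :
        EuclideanSpace ℝ (Fin d) →L[ℝ] ℝ).integrable_comp integrable_condExp).integrableOn)
    (fun s hs hμs => ?_) ?_
  · have h1 := (EuclideanSpace.proj (𝕜 := ℝ) (ι := Fin d) i).integral_comp_comm
      (μ := μ.restrict s) (φ := μ[g|m]) integrable_condExp.integrableOn
    have h2 := (EuclideanSpace.proj (𝕜 := ℝ) (ι := Fin d) i).integral_comp_comm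
      (μ := μ.restrict s) (φ := g) hg.integrableOn
    simp only [EuclideanSpace.proj, PiLp.proj_apply] at h1 h2
    rw [h1, h2, setIntegral_condExp hm hg hs]
  · exact StronglyMeasurable.aestronglyMeasurable
      ((EuclideanSpace.proj i).continuous.comp_stronglyMeasurable stronglyMeasurable_condExp)

lemma euclid_coord_abs_le {d : ℕ} (u : EuclideanSpace ℝ (Fin d)) (i : Fin d) : |u i| ≤ ‖u‖ := by
  rw [EuclideanSpace.norm_eq, ← Real.sqrt_sq_eq_abs]
  apply Real.sqrt_le_sqrt
  calc u i ^ 2 = ‖u i‖ ^ 2 := by rw [Real.norm_eq_abs, sq_abs]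
    _ ≤ ∑ j, ‖u j‖ ^ 2 := Finset.single_le_sum (f := fun j => ‖u j‖ ^ 2) (fun j _ => by positivity) (mem_univ i)

set_option maxHeartbeats 2000000 in
theorem stmt_12
    {d : ℕ} {Ω : Type*} {m0 : MeasurableSpace Ω} {μ : Measure Ω} [IsProbabilityMeasure μ]
    (ℱ : MeasureTheory.Filtration ℕ m0)
    (f : EuclideanSpace ℝ (Fin d) → ℝ)
    (f' : EuclideanSpace ℝ (Fin d) → EuclideanSpace ℝ (Fin d))
    (L A B C ρ : ℝ)
    (hL : 0 < L) (hA : 0 ≤ A) (hB : 0 ≤ B) (hC : 0 ≤ C)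
    (hρ : 0 < ρ) (hρ1 : ρ ≤ 1)
    (hsmooth : ∀ x y, f y ≤ f x + ⟪f' x, y - x⟫ + L / 2 * ‖y - x‖ ^ 2)
    (hconvf : ∀ x y, f x + ⟪f' x, y - x⟫ ≤ f y)
    (xstar : EuclideanSpace ℝ (Fin d))
    (hmin : ∀ y, f xstar ≤ f y)
    -- σ₀² ≤ G‖x₀−x*‖², A + BC/(2ρ) > 0, and γ = 1/(4(A + BC/(2ρ)))
    (G : ℝ) (hG : 0 ≤ G)
    (hpos : 0 < A + B * C / (2 * ρ))
    (γ : ℝ) (hγ : γ = 1 / (4 * (A + B * C / (2 * ρ))))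
    (x g : ℕ → Ω → EuclideanSpace ℝ (Fin d)) (σ2 : ℕ → Ω → ℝ)
    (x0 : EuclideanSpace ℝ (Fin d)) (σ0sq : ℝ)
    (hx0 : ∀ ω, x 0 ω = x0) (hσ0 : ∀ ω, σ2 0 ω = σ0sq)
    (hσ0G : σ0sq ≤ G * ‖x0 - xstar‖ ^ 2)
    (hx_meas : ∀ k, StronglyMeasurable[ℱ k] (x k))
    (hσ_meas : ∀ k, StronglyMeasurable[ℱ k] (σ2 k))
    (hg_meas : ∀ k, StronglyMeasurable[ℱ (k + 1)] (g k))
    (hg_int : ∀ k, Integrable (fun ω => ‖g k ω‖ ^ 2) μ)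
    (hσ_int : ∀ k, Integrable (σ2 k) μ)
    (hf_int : ∀ k, Integrable (fun ω => f (x k ω)) μ)
    (hunbiased : ∀ k, μ[g k | ℱ k] =ᵐ[μ] fun ω => f' (x k ω))
    (hvar : ∀ k, μ[fun ω => ‖g k ω - f' xstar‖ ^ 2 | ℱ k]
      ≤ᵐ[μ] fun ω => 2 * A * (f (x k ω) - f xstar - ⟪f' xstar, x k ω - xstar⟫)
        + B * σ2 k ω)
    (hnoise : ∀ k, μ[σ2 (k + 1) | ℱ k]
      ≤ᵐ[μ] fun ω => (1 - ρ) * σ2 k ω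
        + 2 * C * (f (x k ω) - f xstar - ⟪f' xstar, x k ω - xstar⟫))
    -- the iterates: x_{k+1} = x_k − γ g_k
    (hiter : ∀ k ω, x (k + 1) ω = x k ω - γ • g k ω)
    (ε : ℝ) (hε : 0 < ε) (k : ℕ) (hk : 1 ≤ k)
    (hklarge : (4 * (A + B * C / (2 * ρ)) + B * G / (2 * (2 * ρ * A + B * C)))
      * ‖x0 - xstar‖ ^ 2 / ε ≤ (k : ℝ)) :
    ∫ ω, (f ((k : ℝ)⁻¹ • ∑ j ∈ range k, x j ω) - f xstar) ∂μ ≤ ε := by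
  have hm : ∀ n : ℕ, ℱ n ≤ m0 := fun n => ℱ.le n
  set P : ℝ := A + B * C / (2 * ρ) with hPdef
  have hP : 0 < P := hpos
  have hγpos : 0 < γ := by rw [hγ]; positivity
  have hγP : γ * (4 * P) = 1 := by rw [hγ]; field_simp
  have hstar : f' xstar = 0 := by
    by_contra hne
    have hv : 0 < ‖f' xstar‖ := norm_pos_iff.mpr hne
    have h1 := hsmooth xstar (xstar - (1 / L) • f' xstar)
    have h2 := hmin (xstar - (1 / L) • f' xstar)
    have he : xstar - (1 / L) • f' xstar - xstar = -((1 / L) • f' xstar) := by abel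
    rw [he] at h1
    rw [inner_neg_right, inner_smul_right, real_inner_self_eq_norm_sq, norm_neg, norm_smul] at h1
    simp only [Real.norm_eq_abs, abs_of_nonneg (by positivity : (0:ℝ) ≤ 1 / L)] at h1
    have hc : (0:ℝ) < ‖f' xstar‖ ^ 2 := by positivity
    have hkey : L / 2 * (1 / L * ‖f' xstar‖) ^ 2 = 1 / (2 * L) * ‖f' xstar‖ ^ 2 := by
      field_simp
    rw [hkey] at h1
    have h4 : 1 / L * ‖f' xstar‖ ^ 2 = 2 * (1 / (2 * L) * ‖f' xstar‖ ^ 2) := by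
      field_simp
    have h5 : 0 < 1 / (2 * L) * ‖f' xstar‖ ^ 2 := by positivity
    linarith
  have hbreg : ∀ v : EuclideanSpace ℝ (Fin d),
      f v - f xstar - ⟪f' xstar, v - xstar⟫ = f v - f xstar := by
    intro v; rw [hstar, inner_zero_left]; ring
  have hxSM : ∀ j, StronglyMeasurable (x j) := fun j => (hx_meas j).mono (hm j)
  have hgSM : ∀ j, StronglyMeasurable (g j) := fun j => (hg_meas j).mono (hm (j + 1))
  have hgI : ∀ j, Integrable (g j) μ := by
    intro j
    refine Integrable.mono' ((integrable_const (1:ℝ)).add (hg_int j))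
      (hgSM j).aestronglyMeasurable (Filter.Eventually.of_forall fun ω => ?_)
    have h1 : ‖g j ω‖ ≤ 1 + ‖g j ω‖ ^ 2 := by nlinarith [norm_nonneg (g j ω), sq_nonneg (‖g j ω‖ - 1)]
    simpa using h1
  have hinnI' : ∀ j, Integrable (fun ω => ‖x j ω - xstar‖ ^ 2) μ →
      Integrable (fun ω => ⟪x j ω - xstar, g j ω⟫) μ := by
    intro j hj
    refine Integrable.mono' ((hj.add (hg_int j)).div_const 2)
      (((hxSM j).sub stronglyMeasurable_const).inner (hgSM j)).aestronglyMeasurable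
      (Filter.Eventually.of_forall fun ω => ?_)
    have h1 : |⟪x j ω - xstar, g j ω⟫| ≤ ‖x j ω - xstar‖ * ‖g j ω‖ := abs_real_inner_le_norm _ _
    have h2 : ‖x j ω - xstar‖ * ‖g j ω‖ ≤ (‖x j ω - xstar‖ ^ 2 + ‖g j ω‖ ^ 2) / 2 := by
      nlinarith [sq_nonneg (‖x j ω - xstar‖ - ‖g j ω‖)]
    simpa [Real.norm_eq_abs] using h1.trans h2
  have hexp : ∀ j ω, ‖x (j + 1) ω - xstar‖ ^ 2 =
      ‖x j ω - xstar‖ ^ 2 - 2 * γ * ⟪x j ω - xstar, g j ω⟫ + γ ^ 2 * ‖g j ω‖ ^ 2 := by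
    intro j ω
    have h : x (j + 1) ω - xstar = (x j ω - xstar) - γ • g j ω := by rw [hiter]; abel
    rw [h, norm_sub_sq_real, real_inner_smul_right, norm_smul]
    simp [Real.norm_eq_abs, mul_pow, sq_abs]
    ring
  have hxI2 : ∀ j, Integrable (fun ω => ‖x j ω - xstar‖ ^ 2) μ := by
    intro j
    induction j with
    | zero => simp only [hx0]; exact integrable_const _
    | succ n ih =>
      have : (fun ω => ‖x (n + 1) ω - xstar‖ ^ 2) = fun ω =>
          ‖x n ω - xstar‖ ^ 2 - 2 * γ * ⟪x n ω - xstar, g n ω⟫ + γ ^ 2 * ‖g n ω‖ ^ 2 := by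
        funext ω; exact hexp n ω
      rw [this]
      exact (ih.sub ((hinnI' n ih).const_mul _)).add ((hg_int n).const_mul _)
  have hinnI : ∀ j, Integrable (fun ω => ⟪x j ω - xstar, g j ω⟫) μ := fun j => hinnI' j (hxI2 j)
  have hDI : ∀ j, Integrable (fun ω => f (x j ω) - f xstar) μ :=
    fun j => (hf_int j).sub (integrable_const _)
  have hDnn : ∀ j ω, (0:ℝ) ≤ f (x j ω) - f xstar := fun j ω => sub_nonneg.mpr (hmin _)
  set R : ℝ := ‖x0 - xstar‖ ^ 2 with hRdef
  set a : ℕ → ℝ := fun j => ∫ ω, ‖x j ω - xstar‖ ^ 2 ∂μ with hadef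
  set s : ℕ → ℝ := fun j => ∫ ω, σ2 j ω ∂μ with hsdef
  set dd : ℕ → ℝ := fun j => ∫ ω, (f (x j ω) - f xstar) ∂μ with hdddef
  have hdd_nn : ∀ j, 0 ≤ dd j := fun j => integral_nonneg (fun ω => hDnn j ω)
  have ha_nn : ∀ j, 0 ≤ a j := fun j => integral_nonneg (fun ω => by positivity)
  have ha0 : a 0 = R := by simp [hadef, hx0, hRdef]
  have hs0 : s 0 = σ0sq := by simp [hsdef, hσ0]
  have hSF : ∀ n : ℕ, SigmaFinite (μ.trim (hm n)) := fun n =>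
    (by infer_instance : IsFiniteMeasure (μ.trim (hm n))).toSigmaFinite
  have hgrow : ∀ j, ∫ ω, ‖g j ω‖ ^ 2 ∂μ ≤ 2 * A * dd j + B * s j := by
    intro j
    haveI := hSF j
    have hgI2 : Integrable (fun ω => ‖g j ω - f' xstar‖ ^ 2) μ := by
      simp only [hstar, sub_zero]; exact hg_int j
    have hub : Integrable (fun ω =>
        2 * A * (f (x j ω) - f xstar - ⟪f' xstar, x j ω - xstar⟫) + B * σ2 j ω) μ := by
      simp only [hbreg]
      exact ((hDI j).const_mul _).add ((hσ_int j).const_mul _)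
    have h1 : ∫ ω, ‖g j ω‖ ^ 2 ∂μ = ∫ ω, ‖g j ω - f' xstar‖ ^ 2 ∂μ := by
      simp only [hstar, sub_zero]
    rw [h1, ← integral_condExp (hm j) (f := fun ω => ‖g j ω - f' xstar‖ ^ 2)]
    calc ∫ ω, (μ[fun ω => ‖g j ω - f' xstar‖ ^ 2|ℱ j]) ω ∂μ
        ≤ ∫ ω, (2 * A * (f (x j ω) - f xstar - ⟪f' xstar, x j ω - xstar⟫) + B * σ2 j ω) ∂μ :=
          integral_mono_ae integrable_condExp hub (hvar j)
      _ = 2 * A * dd j + B * s j := by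
          simp only [hbreg]
          rw [integral_add ((hDI j).const_mul _) ((hσ_int j).const_mul _),
            integral_const_mul _, integral_const_mul _]
  have hsrec : ∀ j, s (j + 1) ≤ (1 - ρ) * s j + 2 * C * dd j := by
    intro j
    haveI := hSF j
    have hub : Integrable (fun ω => (1 - ρ) * σ2 j ω
        + 2 * C * (f (x j ω) - f xstar - ⟪f' xstar, x j ω - xstar⟫)) μ := by
      simp only [hbreg]
      exact ((hσ_int j).const_mul _).add ((hDI j).const_mul _)
    have h1 := integral_mono_ae integrable_condExp hub (hnoise j)
    rw [integral_condExp (hm j) (f := σ2 (j + 1))] at h1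
    calc s (j + 1) = ∫ ω, σ2 (j + 1) ω ∂μ := rfl
      _ ≤ ∫ ω, ((1 - ρ) * σ2 j ω
            + 2 * C * (f (x j ω) - f xstar - ⟪f' xstar, x j ω - xstar⟫)) ∂μ := h1
      _ = (1 - ρ) * s j + 2 * C * dd j := by
          simp only [hbreg]
          rw [integral_add ((hσ_int j).const_mul _) ((hDI j).const_mul _),
            integral_const_mul _, integral_const_mul _]
  have hcross : ∀ j, dd j ≤ ∫ ω, ⟪x j ω - xstar, g j ω⟫ ∂μ := by
    intro j
    haveI := hSF j
    have hφeq : (fun ω => ⟪x j ω - xstar, g j ω⟫)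
        = fun ω => ∑ i : Fin d, (x j ω - xstar) i * g j ω i := by
      funext ω
      simp [PiLp.inner_apply, RCLike.inner_apply, conj_trivial]
      exact Finset.sum_congr rfl fun i _ => mul_comm _ _
    have hprod_int : ∀ i : Fin d, Integrable (fun ω => (x j ω - xstar) i * g j ω i) μ := by
      intro i
      refine Integrable.mono' (((hxI2 j).add (hg_int j)).div_const 2)
        (StronglyMeasurable.aestronglyMeasurable
          (((EuclideanSpace.proj i).continuous.comp_stronglyMeasurable
            ((hxSM j).sub stronglyMeasurable_const)).mul
          ((EuclideanSpace.proj i).continuous.comp_stronglyMeasurable (hgSM j))))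
        (Filter.Eventually.of_forall fun ω => ?_)
      have h1 : |(x j ω - xstar) i * g j ω i| ≤ ‖x j ω - xstar‖ * ‖g j ω‖ := by
        rw [abs_mul]
        exact mul_le_mul (euclid_coord_abs_le _ i) (euclid_coord_abs_le _ i)
          (abs_nonneg _) (norm_nonneg _)
      have h2 : ‖x j ω - xstar‖ * ‖g j ω‖ ≤ (‖x j ω - xstar‖ ^ 2 + ‖g j ω‖ ^ 2) / 2 := by
        nlinarith [sq_nonneg (‖x j ω - xstar‖ - ‖g j ω‖)]
      simpa [Real.norm_eq_abs, abs_mul] using h1.trans h2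
    have hcoord : ∀ i : Fin d, (μ[fun ω => (x j ω - xstar) i * g j ω i | ℱ j])
        =ᵐ[μ] fun ω => (x j ω - xstar) i * f' (x j ω) i := by
      intro i
      have hXi : StronglyMeasurable[ℱ j] (fun ω => (x j ω - xstar) i) :=
        (EuclideanSpace.proj i).continuous.comp_stronglyMeasurable
          ((hx_meas j).sub stronglyMeasurable_const)
      have hgiI : Integrable (fun ω => g j ω i) μ :=
        (EuclideanSpace.proj (𝕜 := ℝ) (ι := Fin d) i).integrable_comp (hgI j)
      have h1 : (μ[fun ω => (x j ω - xstar) i * g j ω i | ℱ j])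
          =ᵐ[μ] (fun ω => (x j ω - xstar) i) * (μ[fun ω => g j ω i | ℱ j]) :=
        condExp_mul_of_stronglyMeasurable_left hXi (hprod_int i) hgiI
      have h2 : (μ[fun ω => g j ω i | ℱ j]) =ᵐ[μ] fun ω => f' (x j ω) i := by
        refine (condexp_euclidean_coord (hm j) (hgI j) i).symm.trans ?_
        filter_upwards [hunbiased j] with ω hω
        rw [hω]
      filter_upwards [h1, h2] with ω hω1 hω2
      rw [hω1]
      show (x j ω - xstar) i * (μ[fun ω => g j ω i | ℱ j]) ω = _
      rw [hω2]
    have hsumc : (μ[fun ω => ⟪x j ω - xstar, g j ω⟫ | ℱ j])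
        =ᵐ[μ] fun ω => ∑ i : Fin d, (x j ω - xstar) i * f' (x j ω) i := by
      rw [hφeq]
      have hall : ∀ᵐ ω ∂μ, ∀ i : Fin d,
          (μ[fun ω => (x j ω - xstar) i * g j ω i | ℱ j]) ω
            = (x j ω - xstar) i * f' (x j ω) i :=
        (eventually_countable_forall).mpr hcoord
      have hcs := condExp_finsetSum (μ := μ) (m := ℱ j)
        (f := fun (i : Fin d) ω => (x j ω - xstar) i * g j ω i)
        (s := Finset.univ) (fun i _ => hprod_int i)
      have heq1 : (fun ω => ∑ i : Fin d, (x j ω - xstar) i * g j ω i)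
          = ∑ i : Fin d, (fun ω => (x j ω - xstar) i * g j ω i) := by
        funext ω; simp
      rw [heq1]
      refine hcs.trans ?_
      filter_upwards [hall] with ω hω
      simp only [Finset.sum_apply]
      exact Finset.sum_congr rfl fun i _ => hω i
    have hψI : Integrable (fun ω => ∑ i : Fin d, (x j ω - xstar) i * f' (x j ω) i) μ :=
      integrable_condExp.congr hsumc
    have hψge : ∀ ω, f (x j ω) - f xstar ≤ ∑ i : Fin d, (x j ω - xstar) i * f' (x j ω) i := by
      intro ω
      have h := hconvf (x j ω) xstar
      have h2 : ⟪f' (x j ω), xstar - x j ω⟫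
          = -∑ i : Fin d, (x j ω - xstar) i * f' (x j ω) i := by
        rw [show xstar - x j ω = -(x j ω - xstar) by abel, inner_neg_right, neg_inj]
        simp only [PiLp.inner_apply, RCLike.inner_apply, conj_trivial]
      rw [h2] at h
      linarith
    calc dd j ≤ ∫ ω, ∑ i : Fin d, (x j ω - xstar) i * f' (x j ω) i ∂μ :=
          integral_mono_ae (hDI j) hψI (Filter.Eventually.of_forall hψge)
      _ = ∫ ω, (μ[fun ω => ⟪x j ω - xstar, g j ω⟫ | ℱ j]) ω ∂μ :=
          (integral_congr_ae hsumc).symm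
      _ = ∫ ω, ⟪x j ω - xstar, g j ω⟫ ∂μ := integral_condExp (hm j)
  have ha_rec : ∀ j, a (j + 1) ≤ a j - 2 * γ * dd j + γ ^ 2 * (2 * A * dd j + B * s j) := by
    intro j
    have hv2 : Integrable (fun ω => 2 * γ * ⟪x j ω - xstar, g j ω⟫) μ := by
      exact (hinnI j).const_mul _
    have hw2 : Integrable (fun ω => γ ^ 2 * ‖g j ω‖ ^ 2) μ := by
      exact (hg_int j).const_mul _
    have hx2 : Integrable
        (fun ω => ‖x j ω - xstar‖ ^ 2 - 2 * γ * ⟪x j ω - xstar, g j ω⟫) μ := by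
      exact (hxI2 j).sub hv2
    have heq : a (j + 1) = a j - 2 * γ * (∫ ω, ⟪x j ω - xstar, g j ω⟫ ∂μ)
        + γ ^ 2 * (∫ ω, ‖g j ω‖ ^ 2 ∂μ) := by
      show ∫ ω, ‖x (j + 1) ω - xstar‖ ^ 2 ∂μ = _
      rw [show (fun ω => ‖x (j + 1) ω - xstar‖ ^ 2) = fun ω =>
          ‖x j ω - xstar‖ ^ 2 - 2 * γ * ⟪x j ω - xstar, g j ω⟫ + γ ^ 2 * ‖g j ω‖ ^ 2
          from funext (hexp j)]
      rw [integral_add hx2 hw2, integral_sub (hxI2 j) hv2,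
        integral_const_mul _, integral_const_mul _]
    rw [heq]
    have h1 := hcross j
    have h2 := hgrow j
    have h3 : γ ^ 2 * (∫ ω, ‖g j ω‖ ^ 2 ∂μ) ≤ γ ^ 2 * (2 * A * dd j + B * s j) :=
      mul_le_mul_of_nonneg_left h2 (sq_nonneg γ)
    have h4 : 2 * γ * dd j ≤ 2 * γ * (∫ ω, ⟪x j ω - xstar, g j ω⟫ ∂μ) :=
      mul_le_mul_of_nonneg_left h1 (by positivity)
    linarith
  set M : ℝ := B / ρ with hMdef
  have hMnn : 0 ≤ M := div_nonneg hB hρ.le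
  set t : ℕ → ℝ := fun j => max (s j) 0 with htdef
  have ht_nn : ∀ j, 0 ≤ t j := fun j => le_max_right _ _
  set V : ℕ → ℝ := fun j => a j + M * γ ^ 2 * t j with hVdef
  have hV_nn : ∀ j, 0 ≤ V j := fun j =>
    add_nonneg (ha_nn j) (mul_nonneg (mul_nonneg hMnn (sq_nonneg γ)) (ht_nn j))
  have hV_rec : ∀ j, V (j + 1) + γ * dd j ≤ V j := by
    intro j
    have h1 := ha_rec j
    have h2 := hsrec j
    have htnn := ht_nn j
    have hdd := hdd_nn j
    have hstj : s j ≤ t j := le_max_left _ _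
    have ht1 : t (j + 1) ≤ (1 - ρ) * t j + 2 * C * dd j := by
      refine max_le ?_ ?_
      · refine h2.trans ?_
        have h5 : (0:ℝ) ≤ 1 - ρ := by linarith
        nlinarith
      · have h3 := mul_nonneg (by linarith : (0:ℝ) ≤ 1 - ρ) htnn
        have h4 := mul_nonneg (by linarith : (0:ℝ) ≤ 2 * C) hdd
        linarith
    have hMid : B + M * (1 - ρ) = M := by rw [hMdef]; field_simp; ring
    have hAMC : A + M * C ≤ 2 * P := by
      rw [hMdef, hPdef]
      have h6 : B / ρ * C = 2 * (B * C / (2 * ρ)) := by field_simp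
      linarith
    have hstep : 2 * γ ^ 2 * (A + M * C) ≤ γ := by
      have h5 : 2 * γ ^ 2 * (A + M * C) ≤ 2 * γ ^ 2 * (2 * P) :=
        mul_le_mul_of_nonneg_left hAMC (by positivity)
      have h6 : 2 * γ ^ 2 * (2 * P) = γ * (γ * (4 * P)) := by ring
      rw [hγP, mul_one] at h6
      linarith
    have hstep2 : (2 * γ ^ 2 * (A + M * C)) * dd j ≤ γ * dd j :=
      mul_le_mul_of_nonneg_right hstep hdd
    have hMt : M * γ ^ 2 * t (j + 1) ≤ M * γ ^ 2 * ((1 - ρ) * t j + 2 * C * dd j) :=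
      mul_le_mul_of_nonneg_left ht1 (by positivity)
    have hBs2 : γ ^ 2 * (2 * A * dd j + B * s j) ≤ γ ^ 2 * (2 * A * dd j + B * t j) := by
      have h7 : B * s j ≤ B * t j := mul_le_mul_of_nonneg_left hstj hB
      nlinarith [sq_nonneg γ]
    have hfin : a j - 2 * γ * dd j + γ ^ 2 * (2 * A * dd j + B * t j)
        + M * γ ^ 2 * ((1 - ρ) * t j + 2 * C * dd j) + γ * dd j
        ≤ a j + M * γ ^ 2 * t j := by
      have e1 : a j - 2 * γ * dd j + γ ^ 2 * (2 * A * dd j + B * t j)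
          + M * γ ^ 2 * ((1 - ρ) * t j + 2 * C * dd j) + γ * dd j
          = a j + (B + M * (1 - ρ)) * (γ ^ 2 * t j)
            + ((2 * γ ^ 2 * (A + M * C)) * dd j - γ * dd j) := by ring
      rw [e1, hMid]
      linarith
    show a (j + 1) + M * γ ^ 2 * t (j + 1) + γ * dd j ≤ a j + M * γ ^ 2 * t j
    linarith
  have htel : ∀ n, γ * ∑ j ∈ range n, dd j + V n ≤ V 0 := by
    intro n
    induction n with
    | zero => simp
    | succ n ih =>
      rw [sum_range_succ]
      have := hV_rec n
      linarith
  have hV0 : V 0 ≤ (1 + M * γ ^ 2 * G) * R := by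
    have hRnn : 0 ≤ R := by rw [hRdef]; positivity
    have ht0 : t 0 ≤ G * R := by
      refine max_le ?_ (by positivity)
      rw [hs0]; exact hσ0G
    have h1 : M * γ ^ 2 * t 0 ≤ M * γ ^ 2 * (G * R) :=
      mul_le_mul_of_nonneg_left ht0 (by positivity)
    show a 0 + M * γ ^ 2 * t 0 ≤ (1 + M * γ ^ 2 * G) * R
    rw [ha0]
    nlinarith
  have hKeq : (1 + M * γ ^ 2 * G) / γ = 4 * P + B * G / (2 * (2 * ρ * A + B * C)) := by
    have hρ0 : ρ ≠ 0 := ne_of_gt hρ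
    have hP0 : P ≠ 0 := ne_of_gt hP
    have hQ : 2 * ρ * A + B * C = 2 * ρ * P := by rw [hPdef]; field_simp
    rw [hγ, hMdef, hQ]
    field_simp
    ring
  have hsum : ∑ j ∈ range k, dd j ≤ (4 * P + B * G / (2 * (2 * ρ * A + B * C))) * R := by
    have h1 := htel k
    have h2 := hV_nn k
    have h3 : γ * ∑ j ∈ range k, dd j ≤ (1 + M * γ ^ 2 * G) * R := by linarith [hV0]
    have h4 : ∑ j ∈ range k, dd j ≤ ((1 + M * γ ^ 2 * G) / γ) * R := by
      rw [div_mul_eq_mul_div, le_div_iff₀ hγpos]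
      calc (∑ j ∈ range k, dd j) * γ = γ * ∑ j ∈ range k, dd j := mul_comm _ _
        _ ≤ (1 + M * γ ^ 2 * G) * R := h3
    rw [hKeq] at h4
    exact h4
  have hjen : ∀ ω, f ((k : ℝ)⁻¹ • ∑ j ∈ range k, x j ω) - f xstar
      ≤ (k : ℝ)⁻¹ * ∑ j ∈ range k, (f (x j ω) - f xstar) := by
    intro ω
    set xb := (k : ℝ)⁻¹ • ∑ j ∈ range k, x j ω with hxb
    have hk0 : (k : ℝ) ≠ 0 := Nat.cast_ne_zero.mpr (by omega)
    have hkpos : (0:ℝ) < k := Nat.cast_pos.mpr (by omega)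
    have hsum0 : ∑ j ∈ range k, (x j ω - xb) = 0 := by
      rw [Finset.sum_sub_distrib, Finset.sum_const, card_range, hxb,
        ← Nat.cast_smul_eq_nsmul ℝ, smul_smul, mul_inv_cancel₀ hk0, one_smul, sub_self]
    have hsum1 : ∑ j ∈ range k, (f xb + ⟪f' xb, x j ω - xb⟫) ≤ ∑ j ∈ range k, f (x j ω) :=
      Finset.sum_le_sum fun j _ => hconvf xb (x j ω)
    have hlhs : ∑ j ∈ range k, (f xb + ⟪f' xb, x j ω - xb⟫) = (k : ℝ) * f xb := by
      rw [Finset.sum_add_distrib, Finset.sum_const, card_range, nsmul_eq_mul,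
        ← inner_sum, hsum0, inner_zero_right, add_zero]
    rw [hlhs] at hsum1
    rw [Finset.sum_sub_distrib, Finset.sum_const, card_range, nsmul_eq_mul]
    have h6 : (k : ℝ) * (f xb - f xstar) ≤ ∑ j ∈ range k, f (x j ω) - (k : ℝ) * f xstar := by
      ring_nf; ring_nf at hsum1; linarith
    calc f xb - f xstar = (k : ℝ)⁻¹ * ((k : ℝ) * (f xb - f xstar)) := by field_simp
      _ ≤ (k : ℝ)⁻¹ * (∑ j ∈ range k, f (x j ω) - (k : ℝ) * f xstar) :=
          mul_le_mul_of_nonneg_left h6 (by positivity)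
  have hInt2 : Integrable (fun ω => (k : ℝ)⁻¹ * ∑ j ∈ range k, (f (x j ω) - f xstar)) μ := by
    exact (integrable_finset_sum _ (fun j _ => hDI j)).const_mul _
  have hfinal : ∫ ω, (f ((k : ℝ)⁻¹ • ∑ j ∈ range k, x j ω) - f xstar) ∂μ
      ≤ ∫ ω, (k : ℝ)⁻¹ * ∑ j ∈ range k, (f (x j ω) - f xstar) ∂μ :=
    integral_mono_of_nonneg
      (Filter.Eventually.of_forall fun ω => sub_nonneg.mpr (hmin _)) hInt2
      (Filter.Eventually.of_forall hjen)
  have heval : ∫ ω, (k : ℝ)⁻¹ * ∑ j ∈ range k, (f (x j ω) - f xstar) ∂μ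
      = (k : ℝ)⁻¹ * ∑ j ∈ range k, dd j := by
    rw [integral_const_mul _, integral_finset_sum _ (fun j _ => hDI j)]
  have hkpos : (0:ℝ) < k := Nat.cast_pos.mpr (by omega)
  have h7 : (4 * P + B * G / (2 * (2 * ρ * A + B * C))) * R ≤ (k : ℝ) * ε := by
    rw [div_le_iff₀ hε] at hklarge
    linarith
  have h8 : (k : ℝ)⁻¹ * ∑ j ∈ range k, dd j ≤ ε := by
    have h9 : ∑ j ∈ range k, dd j ≤ (k : ℝ) * ε := le_trans hsum h7
    calc (k : ℝ)⁻¹ * ∑ j ∈ range k, dd j ≤ (k : ℝ)⁻¹ * ((k : ℝ) * ε) :=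
          mul_le_mul_of_nonneg_left h9 (by positivity)
      _ = ε := by field_simp
  exact le_trans (hfinal.trans_eq heval) h8
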